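/- arXiv:2105.03913 — 2 statements merged into one kernel-verified Lean document; each statement's English description precedes it below -/
import Mathlib

section
/- Let G be a finite group of order 4p, where p is a prime, let H be a nontrivial subgroup of G, and let x ∈ G. If HxH ≠ Hx⁻¹H, then for any integer b with 0 ≤ b ≤ |H|, there exist b pairwise disjoint right transversals of H in HxH ∪ Hx⁻¹H whose union is inverse-closed. -/
open scoped Pointwise

/-- The double coset `HxH = {h₁ * x * h₂ : h₁, h₂ ∈ H}`. -/
def doubleCoset {G : Type*} [Group G] (H : Subgroup G) (x : G) : Set G :=
  (H : Set G) * {x} * (H : Set G)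

/-- For a subset `K` of `G` that is a union of right cosets of `H`, a right transversal of
`H` in `K` is a subset `T` of `K` containing exactly one element from each right coset of
`H` contained in `K`. -/
def IsRightTransversalIn {G : Type*} [Group G] (H : Subgroup G) (K T : Set G) : Prop :=
  T ⊆ K ∧ ∀ x ∈ K, ∃! t, t ∈ T ∧ t * x⁻¹ ∈ H

section helpers
variable {G : Type*} [Group G] {H : Subgroup G}

lemma mem_dc {x a : G} :
    a ∈ doubleCoset H x ↔ ∃ h₁ ∈ H, ∃ h₂ ∈ H, h₁ * x * h₂ = a := by
  constructor
  · rintro ⟨u, ⟨h₁, hh₁, y, hy, rfl⟩, h₂, hh₂, rfl⟩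
    rcases hy with rfl
    exact ⟨h₁, hh₁, h₂, hh₂, rfl⟩
  · rintro ⟨h₁, hh₁, h₂, hh₂, rfl⟩
    exact ⟨h₁ * x, ⟨h₁, hh₁, x, rfl, rfl⟩, h₂, hh₂, rfl⟩

lemma mem_lc {g a : G} : a ∈ {g} * (H : Set G) ↔ ∃ h ∈ H, g * h = a := by
  constructor
  · rintro ⟨y, hy, h, hh, rfl⟩; rcases hy with rfl; exact ⟨h, hh, rfl⟩
  · rintro ⟨h, hh, rfl⟩; exact ⟨g, rfl, h, hh, rfl⟩

lemma mem_rc {g a : G} : a ∈ (H : Set G) * {g} ↔ a * g⁻¹ ∈ H := by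
  constructor
  · rintro ⟨h, hh, y, hy, rfl⟩; rcases hy with rfl; simpa using hh
  · intro h; exact ⟨a * g⁻¹, h, g, rfl, by group⟩

lemma mem_lc' {g a : G} : a ∈ {g} * (H : Set G) ↔ g⁻¹ * a ∈ H := by
  rw [mem_lc]
  constructor
  · rintro ⟨h, hh, rfl⟩; simpa using hh
  · intro h; exact ⟨g⁻¹ * a, h, by group⟩

lemma self_mem_lc {g : G} : g ∈ {g} * (H : Set G) := mem_lc.2 ⟨1, one_mem _, mul_one g⟩

lemma self_mem_rc {g : G} : g ∈ (H : Set G) * {g} := mem_rc.2 (by simpa using one_mem H)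

lemma lc_eq_iff {a g : G} : {a} * (H : Set G) = {g} * (H : Set G) ↔ a ∈ {g} * (H : Set G) := by
  constructor
  · intro h; rw [← h]; exact self_mem_lc
  · rw [mem_lc']; intro h
    ext t
    rw [mem_lc', mem_lc']
    constructor
    · intro ht; simpa [mul_assoc] using H.mul_mem h ht
    · intro ht; simpa [mul_assoc] using H.mul_mem (H.inv_mem h) ht

lemma rc_eq_iff {a g : G} : (H : Set G) * {a} = (H : Set G) * {g} ↔ a ∈ (H : Set G) * {g} := by
  constructor
  · intro h; rw [← h]; exact self_mem_rc
  · rw [mem_rc]; intro h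
    ext t
    rw [mem_rc, mem_rc]
    constructor
    · intro ht
      have := H.mul_mem ht h
      simpa [mul_assoc] using this
    · intro ht
      have := H.mul_mem ht (H.inv_mem h)
      simpa [mul_assoc] using this

lemma dc_self_mem {x g : G} (hg : g ∈ doubleCoset H x) : doubleCoset H g = doubleCoset H x := by
  obtain ⟨h₁, hh₁, h₂, hh₂, rfl⟩ := mem_dc.1 hg
  ext a
  rw [mem_dc, mem_dc]
  constructor
  · rintro ⟨p, hp, q, hq, rfl⟩
    exact ⟨p * h₁, H.mul_mem hp hh₁, h₂ * q, H.mul_mem hh₂ hq, by group⟩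
  · rintro ⟨p, hp, q, hq, rfl⟩
    exact ⟨p * h₁⁻¹, H.mul_mem hp (H.inv_mem hh₁), h₂⁻¹ * q,
      H.mul_mem (H.inv_mem hh₂) hq, by group⟩

lemma dc_inv {x : G} : (doubleCoset H x)⁻¹ = doubleCoset H x⁻¹ := by
  ext a
  rw [Set.mem_inv, mem_dc, mem_dc]
  constructor
  · rintro ⟨p, hp, q, hq, h⟩
    refine ⟨q⁻¹, H.inv_mem hq, p⁻¹, H.inv_mem hp, ?_⟩
    have : a = (p * x * q)⁻¹ := by rw [h]; group
    rw [this]; group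
  · rintro ⟨p, hp, q, hq, rfl⟩
    exact ⟨q⁻¹, H.inv_mem hq, p⁻¹, H.inv_mem hp, by group⟩

lemma lc_sub_dc {x g : G} (hg : g ∈ doubleCoset H x) : {g} * (H : Set G) ⊆ doubleCoset H x := by
  intro a ha
  obtain ⟨h, hh, rfl⟩ := mem_lc.1 ha
  obtain ⟨h₁, hh₁, h₂, hh₂, rfl⟩ := mem_dc.1 hg
  exact mem_dc.2 ⟨h₁, hh₁, h₂ * h, H.mul_mem hh₂ hh, by group⟩

lemma rc_sub_dc {x g : G} (hg : g ∈ doubleCoset H x) : (H : Set G) * {g} ⊆ doubleCoset H x := by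
  intro a ha
  have h := mem_rc.1 ha
  obtain ⟨h₁, hh₁, h₂, hh₂, hg'⟩ := mem_dc.1 hg
  refine mem_dc.2 ⟨a * g⁻¹ * h₁, H.mul_mem h hh₁, h₂, hh₂, ?_⟩
  rw [← hg']; group

lemma cell_card {x : G} {d₁ d₂ : G} (hd₁ : d₁ ∈ doubleCoset H x)
    (hd₂ : d₂ ∈ doubleCoset H x) :
    Nat.card ↥(({d₁} * (H : Set G)) ∩ ((H : Set G) * {d₂})) =
      Nat.card ↥(({x} * (H : Set G)) ∩ ((H : Set G) * {x})) := by
  obtain ⟨h₁, hh₁, h₂, hh₂, hd₁'⟩ := mem_dc.1 hd₁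
  obtain ⟨h₃, hh₃, h₄, hh₄, hd₂'⟩ := mem_dc.1 hd₂
  subst hd₁' hd₂'
  refine Nat.card_congr ⟨fun g => ⟨h₁⁻¹ * g * h₄⁻¹, ?_, ?_⟩, fun g => ⟨h₁ * g * h₄, ?_, ?_⟩, ?_, ?_⟩
  · -- h₁⁻¹ g h₄⁻¹ ∈ xH
    obtain ⟨h, hh, hgh⟩ := mem_lc.1 g.2.1
    rw [mem_lc']
    have : x⁻¹ * (h₁⁻¹ * (g : G) * h₄⁻¹) = h₂ * h * h₄⁻¹ := by
      rw [← hgh]; group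
    rw [this]
    exact H.mul_mem (H.mul_mem hh₂ hh) (H.inv_mem hh₄)
  · -- ∈ Hx
    have h := mem_rc.1 g.2.2
    rw [mem_rc]
    have : h₁⁻¹ * (g : G) * h₄⁻¹ * x⁻¹ = h₁⁻¹ * ((g : G) * (h₃ * x * h₄)⁻¹) * h₃ := by
      group
    rw [this]
    exact H.mul_mem (H.mul_mem (H.inv_mem hh₁) h) hh₃
  · -- h₁ g h₄ ∈ d₁ H
    have h := mem_lc'.1 g.2.1
    rw [mem_lc']
    have : (h₁ * x * h₂)⁻¹ * (h₁ * (g : G) * h₄) = h₂⁻¹ * (x⁻¹ * (g : G)) * h₄ := by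
      group
    rw [this]
    exact H.mul_mem (H.mul_mem (H.inv_mem hh₂) h) hh₄
  · -- h₁ g h₄ ∈ H d₂
    have h := mem_rc.1 g.2.2
    rw [mem_rc]
    have : h₁ * (g : G) * h₄ * (h₃ * x * h₄)⁻¹ = h₁ * ((g : G) * x⁻¹) * h₃⁻¹ := by
      group
    rw [this]
    exact H.mul_mem (H.mul_mem hh₁ h) (H.inv_mem hh₃)
  · intro g; apply Subtype.ext; simp only []; group
  · intro g; apply Subtype.ext; simp only []; group

lemma cell_nonempty {x : G} {d₁ d₂ : G} (hd₁ : d₁ ∈ doubleCoset H x)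
    (hd₂ : d₂ ∈ doubleCoset H x) :
    (({d₁} * (H : Set G)) ∩ ((H : Set G) * {d₂})).Nonempty := by
  obtain ⟨h₁, hh₁, h₂, hh₂, hd₁'⟩ := mem_dc.1 hd₁
  obtain ⟨h₃, hh₃, h₄, hh₄, hd₂'⟩ := mem_dc.1 hd₂
  subst hd₁' hd₂'
  refine ⟨h₁ * x * h₄, ?_, ?_⟩
  · rw [mem_lc']
    have : (h₁ * x * h₂)⁻¹ * (h₁ * x * h₄) = h₂⁻¹ * h₄ := by group
    rw [this]; exact H.mul_mem (H.inv_mem hh₂) hh₄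
  · rw [mem_rc]
    have : h₁ * x * h₄ * (h₃ * x * h₄)⁻¹ = h₁ * h₃⁻¹ := by group
    rw [this]; exact H.mul_mem hh₁ (H.inv_mem hh₃)

lemma lc_card {g : G} : Nat.card ↥({g} * (H : Set G)) = Nat.card H := by
  refine Nat.card_congr ⟨fun a => ⟨g⁻¹ * a, mem_lc'.1 a.2⟩, fun h => ⟨g * h, mem_lc.2 ⟨h, h.2, rfl⟩⟩, ?_, ?_⟩
  · intro a; apply Subtype.ext; simp only []; group
  · intro h; apply Subtype.ext; simp only []; group

end helpers

lemma core_lemma {D I J : Type*} [Finite D] [Finite I] [Finite J]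
    (l : D → I) (r : D → J) (m c b : ℕ)
    (hI : Nat.card I = m) (hJ : Nat.card J = m)
    (hfib : ∀ i j, Nat.card {d : D // l d = i ∧ r d = j} = c)
    (hb : b ≤ m * c) :
    ∃ A : Fin b → Set D,
      (∀ k i, ∃! d, d ∈ A k ∧ l d = i) ∧
      (∀ k j, ∃! d, d ∈ A k ∧ r d = j) ∧
      ∀ k k', k ≠ k' → Disjoint (A k) (A k') := by
  rcases Nat.eq_zero_or_pos b with hb0 | hb0
  · subst hb0
    exact ⟨Fin.elim0, fun k => k.elim0, fun k => k.elim0, fun k => k.elim0⟩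
  have hmc : 0 < m * c := lt_of_lt_of_le hb0 hb
  have hm : 0 < m := Nat.pos_of_mul_pos_left (by rwa [mul_comm] at hmc)
  have hc : 0 < c := Nat.pos_of_mul_pos_left hmc
  let eI : I ≃ Fin m := (Finite.equivFin I).trans (finCongr hI)
  let eJ : J ≃ Fin m := (Finite.equivFin J).trans (finCongr hJ)
  let eF : ∀ i j, {d : D // l d = i ∧ r d = j} ≃ Fin c :=
    fun i j => (Finite.equivFin _).trans (finCongr (hfib i j))
  -- the chosen element for stage k and left-index i
  have hq : ∀ k : Fin b, (k : ℕ) / m < c := fun k =>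
    Nat.div_lt_of_lt_mul (lt_of_lt_of_le k.2 hb)
  let jdx : Fin b → I → Fin m := fun k i => ⟨((eI i : ℕ) + (k : ℕ) % m) % m, Nat.mod_lt _ hm⟩
  let elt : Fin b → I → D := fun k i =>
    ((eF i (eJ.symm (jdx k i))).symm ⟨(k : ℕ) / m, hq k⟩).1
  have helt : ∀ k i, l (elt k i) = i ∧ r (elt k i) = eJ.symm (jdx k i) :=
    fun k i => ((eF i (eJ.symm (jdx k i))).symm ⟨(k : ℕ) / m, hq k⟩).2
  refine ⟨fun k => Set.range (elt k), ?_, ?_, ?_⟩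
  · -- unique per left index
    intro k i
    refine ⟨elt k i, ⟨⟨i, rfl⟩, (helt k i).1⟩, ?_⟩
    rintro d ⟨⟨i', rfl⟩, hli⟩
    rw [(helt k i').1] at hli; rw [hli]
  · -- unique per right index
    intro k j
    -- choose i with (eI i + k % m) % m = eJ j
    have hsle : (k : ℕ) % m ≤ m := le_of_lt (Nat.mod_lt _ hm)
    refine ⟨elt k (eI.symm ⟨((eJ j : ℕ) + (m - (k : ℕ) % m)) % m, Nat.mod_lt _ hm⟩), ⟨⟨_, rfl⟩, ?_⟩, ?_⟩
    · rw [(helt k _).2]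
      have : jdx k (eI.symm ⟨((eJ j : ℕ) + (m - (k : ℕ) % m)) % m, Nat.mod_lt _ hm⟩) = eJ j := by
        apply Fin.ext
        simp only [jdx, Equiv.apply_symm_apply]
        rw [Nat.mod_add_mod, add_assoc, Nat.sub_add_cancel hsle, Nat.add_mod_right,
          Nat.mod_eq_of_lt (eJ j).2]
      rw [this, Equiv.symm_apply_apply]
    · rintro d ⟨⟨i', rfl⟩, hri⟩
      rw [(helt k i').2] at hri
      have hji : jdx k i' = eJ j := by
        have := congrArg eJ hri
        rwa [Equiv.apply_symm_apply] at this
      congr 1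
      apply eI.injective
      apply Fin.ext
      have h2 : ((eI i' : ℕ) + (k : ℕ) % m) % m = (eJ j : ℕ) := congrArg Fin.val hji
      rw [Equiv.apply_symm_apply]
      simp only []
      rw [← h2, Nat.mod_add_mod, add_assoc, Nat.add_sub_cancel' hsle, Nat.add_mod_right,
        Nat.mod_eq_of_lt (eI i').2]
  · -- disjoint
    intro k k' hkk'
    rw [Set.disjoint_left]
    rintro d hdk hdk'
    obtain ⟨i, rfl⟩ := hdk
    obtain ⟨i', hd⟩ := hdk'
    apply hkk'
    -- same l-value gives i = i'
    have hii : i' = i := by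
      have := congrArg l hd
      rw [(helt k' i').1, (helt k i).1] at this; exact this
    rw [hii] at hd
    have hrr := congrArg r hd
    rw [(helt k' i).2, (helt k i).2] at hrr
    have hjj : jdx k' i = jdx k i := eJ.symm.injective hrr
    have hss : (k' : ℕ) % m = (k : ℕ) % m := by
      have h3 : ((eI i : ℕ) + (k' : ℕ) % m) % m = ((eI i : ℕ) + (k : ℕ) % m) % m :=
        congrArg Fin.val hjj
      have h4 : ((eI i : ℕ) + (k' : ℕ) % m) ≡ ((eI i : ℕ) + (k : ℕ) % m) [MOD m] := h3
      have h5 := (Nat.ModEq.add_left_cancel' _ h4)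
      have := h5.eq_of_lt_of_lt (Nat.mod_lt _ hm) (Nat.mod_lt _ hm)
      exact this
    -- same element in same fiber gives same division index
    have hjdx : jdx k' i = jdx k i := hjj
    have key : ∀ (j j' : J), j = j' → ∀ (a b : Fin c),
        ((eF i j).symm a : D) = ((eF i j').symm b : D) → a = b := by
      rintro j j' rfl a b h
      exact (eF i j).symm.injective (Subtype.ext h)
    simp only [elt] at hd
    have hdiv : (k' : ℕ) / m = (k : ℕ) / m :=
      congrArg Fin.val (key _ _ (congrArg eJ.symm hjdx) _ _ hd)
    apply Fin.ext
    rw [← Nat.div_add_mod (k : ℕ) m, ← Nat.div_add_mod (k' : ℕ) m, hss, hdiv]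


lemma main_general {G : Type*} [Group G] [Fintype G] (H : Subgroup G) (x : G)
    (h1 : doubleCoset H x ≠ doubleCoset H x⁻¹) (b : ℕ) (hb : b ≤ Nat.card H) :
    ∃ R : Fin b → Set G,
      (∀ i, IsRightTransversalIn H (doubleCoset H x ∪ doubleCoset H x⁻¹) (R i)) ∧
      (∀ i j, i ≠ j → Disjoint (R i) (R j)) ∧
      (⋃ i, R i) = (⋃ i, R i)⁻¹ := by
  classical
  have hxD : x ∈ doubleCoset H x := mem_dc.2 ⟨1, one_mem _, 1, one_mem _, by group⟩
  have hdisj : ∀ g, g ∈ doubleCoset H x → g ∉ doubleCoset H x⁻¹ := by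
    intro g hg hg'
    exact h1 ((dc_self_mem hg).symm.trans (dc_self_mem hg'))
  have hD'inv : (doubleCoset H x⁻¹)⁻¹ = doubleCoset H x := by
    rw [← dc_inv, inv_inv]
  have hDinv : (doubleCoset H x)⁻¹ = doubleCoset H x⁻¹ := dc_inv
  -- index types
  let I := {s : Set G // ∃ g ∈ doubleCoset H x, s = {g} * (H : Set G)}
  let J := {s : Set G // ∃ g ∈ doubleCoset H x, s = (H : Set G) * {g}}
  let l : ↥(doubleCoset H x) → I := fun d => ⟨{(d : G)} * (H : Set G), ⟨d, d.2, rfl⟩⟩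
  let r : ↥(doubleCoset H x) → J := fun d => ⟨(H : Set G) * {(d : G)}, ⟨d, d.2, rfl⟩⟩
  set c : ℕ := Nat.card ↥(({x} * (H : Set G)) ∩ ((H : Set G) * {x})) with hc_def
  have hcpos : 0 < c := by
    rw [hc_def]
    haveI := (cell_nonempty hxD hxD).to_subtype
    exact Nat.card_pos
  -- fibers of the pair map
  have hfib : ∀ (i : I) (j : J),
      Nat.card {d : ↥(doubleCoset H x) // l d = i ∧ r d = j} = c := by
    rintro ⟨S, d₁, hd₁, rfl⟩ ⟨T, d₂, hd₂, rfl⟩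
    rw [hc_def, ← cell_card hd₁ hd₂]
    refine Nat.card_congr ⟨fun d => ⟨d.1.1, ?_, ?_⟩, fun a => ⟨⟨a.1, lc_sub_dc hd₁ a.2.1⟩,
      Subtype.ext (lc_eq_iff.2 a.2.1), Subtype.ext (rc_eq_iff.2 a.2.2)⟩, ?_, ?_⟩
    · exact lc_eq_iff.1 (Subtype.ext_iff.1 d.2.1)
    · exact rc_eq_iff.1 (Subtype.ext_iff.1 d.2.2)
    · intro d; apply Subtype.ext; apply Subtype.ext; rfl
    · intro a; apply Subtype.ext; rfl
  -- fibers of l and of r have card |H|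
  have hlfib : ∀ i : I, Nat.card {d : ↥(doubleCoset H x) // l d = i} = Nat.card H := by
    rintro ⟨S, g, hg, rfl⟩
    rw [← lc_card (H := H) (g := g)]
    refine Nat.card_congr ⟨fun d => ⟨d.1.1, lc_eq_iff.1 (Subtype.ext_iff.1 d.2)⟩,
      fun a => ⟨⟨a.1, lc_sub_dc hg a.2⟩, Subtype.ext (lc_eq_iff.2 a.2)⟩, ?_, ?_⟩
    · intro d; apply Subtype.ext; apply Subtype.ext; rfl
    · intro a; apply Subtype.ext; rfl
  have hrfib : ∀ j : J, Nat.card {d : ↥(doubleCoset H x) // r d = j} = Nat.card H := by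
    rintro ⟨S, g, hg, rfl⟩
    have hcard : Nat.card ↥((H : Set G) * {g}) = Nat.card H := by
      refine Nat.card_congr ⟨fun a => ⟨a.1 * g⁻¹, mem_rc.1 a.2⟩,
        fun h => ⟨h.1 * g, mem_rc.2 (by simpa using h.2)⟩, ?_, ?_⟩
      · intro a; apply Subtype.ext; simp only []; group
      · intro h; apply Subtype.ext; simp only []; group
    rw [← hcard]
    refine Nat.card_congr ⟨fun d => ⟨d.1.1, rc_eq_iff.1 (Subtype.ext_iff.1 d.2)⟩,
      fun a => ⟨⟨a.1, rc_sub_dc hg a.2⟩, Subtype.ext (rc_eq_iff.2 a.2)⟩, ?_, ?_⟩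
    · intro d; apply Subtype.ext; apply Subtype.ext; rfl
    · intro a; apply Subtype.ext; rfl
  -- partition a fiber of l by r
  have hlJ : ∀ i : I, Nat.card {d : ↥(doubleCoset H x) // l d = i} = Nat.card J * c := by
    intro i
    have e1 : {d : ↥(doubleCoset H x) // l d = i} ≃ Σ j : J,
        {d : ↥(doubleCoset H x) // l d = i ∧ r d = j} :=
      ((Equiv.sigmaFiberEquiv (fun p : {d : ↥(doubleCoset H x) // l d = i} => r p.1)).symm.trans
        (Equiv.sigmaCongrRight (fun j =>
          (Equiv.subtypeSubtypeEquivSubtypeInter (fun d => l d = i) (fun d => r d = j)))))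
    have e2 : (Σ j : J, {d : ↥(doubleCoset H x) // l d = i ∧ r d = j}) ≃ J × Fin c :=
      (Equiv.sigmaCongrRight (fun j => (Finite.equivFin _).trans (finCongr (hfib i j)))).trans
        (Equiv.sigmaEquivProd J (Fin c))
    rw [Nat.card_congr (e1.trans e2), Nat.card_prod]
    simp
  have hrI : ∀ j : J, Nat.card {d : ↥(doubleCoset H x) // r d = j} = Nat.card I * c := by
    intro j
    have e1 : {d : ↥(doubleCoset H x) // r d = j} ≃ Σ i : I,
        {d : ↥(doubleCoset H x) // l d = i ∧ r d = j} :=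
      ((Equiv.sigmaFiberEquiv (fun p : {d : ↥(doubleCoset H x) // r d = j} => l p.1)).symm.trans
        (Equiv.sigmaCongrRight (fun i =>
          ((Equiv.subtypeSubtypeEquivSubtypeInter (fun d => r d = j) (fun d => l d = i)).trans
            (Equiv.subtypeEquivRight (fun d => and_comm))))))
    have e2 : (Σ i : I, {d : ↥(doubleCoset H x) // l d = i ∧ r d = j}) ≃ I × Fin c :=
      (Equiv.sigmaCongrRight (fun i => (Finite.equivFin _).trans (finCongr (hfib i j)))).trans
        (Equiv.sigmaEquivProd I (Fin c))
    rw [Nat.card_congr (e1.trans e2), Nat.card_prod]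
    simp
  have hJc : Nat.card J * c = Nat.card H := by
    rw [← hlJ (l ⟨x, hxD⟩), hlfib]
  have hIc : Nat.card I * c = Nat.card H := by
    rw [← hrI (r ⟨x, hxD⟩), hrfib]
  have hJI : Nat.card J = Nat.card I :=
    Nat.eq_of_mul_eq_mul_right hcpos (hJc.trans hIc.symm)
  have hb' : b ≤ Nat.card I * c := by rw [hIc]; exact hb
  obtain ⟨A, hA1, hA2, hA3⟩ := core_lemma l r (Nat.card I) c b rfl hJI hfib hb'
  -- translations
  have hr_mem : ∀ (a : ↥(doubleCoset H x)) (y : G) (hy : y ∈ doubleCoset H x),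
      r a = r ⟨y, hy⟩ ↔ (a : G) * y⁻¹ ∈ H := by
    intro a y hy
    exact Subtype.ext_iff.trans (rc_eq_iff.trans mem_rc)
  have hl_mem : ∀ (a : ↥(doubleCoset H x)) (y : G) (hy : y ∈ doubleCoset H x),
      l a = l ⟨y, hy⟩ ↔ y⁻¹ * (a : G) ∈ H := by
    intro a y hy
    exact Subtype.ext_iff.trans (lc_eq_iff.trans mem_lc')
  refine ⟨fun k => (Subtype.val '' A k) ∪ (Subtype.val '' A k)⁻¹, ?_, ?_, ?_⟩
  · -- transversal property
    intro k
    constructor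
    · rintro t (⟨a, _, rfl⟩ | ht)
      · exact Or.inl a.2
      · right
        rw [← hDinv]
        rw [Set.mem_inv] at ht ⊢
        obtain ⟨a, _, ha⟩ := ht
        rw [← ha]; exact a.2
    · rintro y (hy | hy)
      · obtain ⟨a, ⟨haA, har⟩, huniq⟩ := hA2 k (r ⟨y, hy⟩)
        refine ⟨(a : G), ⟨Or.inl ⟨a, haA, rfl⟩, (hr_mem a y hy).1 har⟩, ?_⟩
        rintro t ⟨(⟨a', ha', rfl⟩ | ht) , htH⟩
        · have : a' = a := huniq a' ⟨ha', (hr_mem a' y hy).2 htH⟩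
          rw [this]
        · exfalso
          have htD : t ∈ doubleCoset H x := rc_sub_dc hy (mem_rc.2 htH)
          have htD' : t ∈ doubleCoset H x⁻¹ := by
            rw [← hDinv, Set.mem_inv]
            rw [Set.mem_inv] at ht
            obtain ⟨a', _, ha'⟩ := ht
            rw [← ha']
            exact a'.2
          exact hdisj t htD htD'
      · have hy' : y⁻¹ ∈ doubleCoset H x := by
          rw [← hD'inv, Set.mem_inv, inv_inv]; exact hy
        obtain ⟨a, ⟨haA, hal⟩, huniq⟩ := hA1 k (l ⟨y⁻¹, hy'⟩)
        have hmemH : y * (a : G) ∈ H := by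
          have := (hl_mem a y⁻¹ hy').1 hal
          simpa using this
        refine ⟨(a : G)⁻¹, ⟨Or.inr ?_, ?_⟩, ?_⟩
        · rw [Set.mem_inv, inv_inv]; exact ⟨a, haA, rfl⟩
        · have : (a : G)⁻¹ * y⁻¹ = (y * (a : G))⁻¹ := by group
          rw [this]; exact H.inv_mem hmemH
        · rintro t ⟨(⟨a', ha', rfl⟩ | ht), htH⟩
          · exfalso
            have htD' : (a' : G) ∈ doubleCoset H x⁻¹ := rc_sub_dc hy (mem_rc.2 htH)
            exact hdisj _ a'.2 htD'
          · rw [Set.mem_inv] at ht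
            obtain ⟨a', ha', ha'e⟩ := ht
            have hmem' : y * (a' : G) ∈ H := by
              have h2 : t * y⁻¹ ∈ H := htH
              have h3 : y * (a' : G) = (t * y⁻¹)⁻¹ := by rw [ha'e]; group
              rw [h3]; exact H.inv_mem h2
            have : a' = a := huniq a' ⟨ha', (hl_mem a' y⁻¹ hy').2 (by simpa using hmem')⟩
            rw [← inv_inv t, ← ha'e, this]
  · -- pairwise disjoint
    intro k k' hkk'
    rw [Set.disjoint_left]
    rintro t (⟨a, ha, rfl⟩ | ht) (⟨a', ha', he⟩ | ht')
    · have : a' = a := Subtype.ext he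
      rw [this] at ha'
      exact Set.disjoint_left.1 (hA3 k k' hkk') ha ha'
    · rw [Set.mem_inv] at ht'
      obtain ⟨a', _, ha'e⟩ := ht'
      have h1' : (a : G) ∈ doubleCoset H x := a.2
      have h2' : (a : G) ∈ doubleCoset H x⁻¹ := by
        rw [← hDinv, Set.mem_inv, ← ha'e]
        exact a'.2
      exact hdisj _ h1' h2'
    · rw [Set.mem_inv] at ht
      obtain ⟨a, _, hae⟩ := ht
      have h1' : t ∈ doubleCoset H x := by rw [← he]; exact a'.2
      have h2' : t ∈ doubleCoset H x⁻¹ := by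
        rw [← hDinv, Set.mem_inv, ← hae]
        exact a.2
      exact hdisj _ h1' h2'
    · rw [Set.mem_inv] at ht ht'
      obtain ⟨a, ha, hae⟩ := ht
      obtain ⟨a', ha', ha'e⟩ := ht'
      have : a' = a := Subtype.ext (ha'e.trans hae.symm)
      rw [this] at ha'
      exact Set.disjoint_left.1 (hA3 k k' hkk') ha ha'
  · -- inverse closed
    have hRinv : ∀ k : Fin b,
        ((Subtype.val '' A k) ∪ (Subtype.val '' A k)⁻¹)⁻¹
          = (Subtype.val '' A k) ∪ (Subtype.val '' A k)⁻¹ := by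
      intro k
      ext g
      simp only [Set.mem_union, Set.mem_inv, inv_inv]
      tauto
    ext g
    simp only [Set.mem_iUnion, Set.mem_inv]
    constructor
    · rintro ⟨k, hk⟩
      refine ⟨k, ?_⟩
      rw [← hRinv k] at hk
      simpa [Set.mem_inv] using hk
    · rintro ⟨k, hk⟩
      refine ⟨k, ?_⟩
      rw [← hRinv k]
      simpa [Set.mem_inv] using hk


theorem statement_18 {G : Type*} [Group G] [Fintype G] (p : ℕ) (hp : p.Prime)
    (hG : Nat.card G = 4 * p) (H : Subgroup G) (hH : H ≠ ⊥) (x : G)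
    (h1 : doubleCoset H x ≠ doubleCoset H x⁻¹) :
    ∀ b : ℕ, b ≤ Nat.card H →
      ∃ R : Fin b → Set G,
        (∀ i, IsRightTransversalIn H (doubleCoset H x ∪ doubleCoset H x⁻¹) (R i)) ∧
        (∀ i j, i ≠ j → Disjoint (R i) (R j)) ∧
        (⋃ i, R i) = (⋃ i, R i)⁻¹ := by
  intro b hb
  exact main_general H x h1 b hb
end

section
/- Let G be a finite group of order 4p, where p is a prime, let H be a nontrivial subgroup of G, and let x ∈ G∖H be such that HxH = Hx⁻¹H. Suppose that HxH contains an involution whenever |HxH|/|H| is odd. Then for any integer b with 0 ≤ b ≤ |H|, there exist b pairwise disjoint right transversals of H in HxH whose union is inverse-closed. -/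
open scoped Pointwise

lemma exists_inv_closed_subset {α : Type*} [DecidableEq α] (f : α → α)
    (hf : ∀ a, f (f a) = a) :
    ∀ (s : ℕ) (A : Finset α), (∀ a ∈ A, f a ∈ A) → s ≤ A.card →
      (Even s ∨ ∃ a ∈ A, f a = a) →
      ∃ S, S ⊆ A ∧ S.card = s ∧ ∀ a ∈ S, f a ∈ S := by
  intro s
  induction s using Nat.strong_induction_on with
  | _ s ih =>
    intro A hcl hle hpar
    rcases Nat.eq_zero_or_pos s with hs0 | hs0
    · exact ⟨∅, Finset.empty_subset _, by simp [hs0], by simp⟩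
    by_cases hev : Even s
    · by_cases hmov : ∃ a ∈ A, f a ≠ a
      · obtain ⟨a, haA, hane⟩ := hmov
        have hfaA : f a ∈ A := hcl a haA
        set A' := (A.erase a).erase (f a) with hA'
        have hfa_mem : f a ∈ A.erase a := Finset.mem_erase.mpr ⟨hane, hfaA⟩
        have hcard' : A'.card = A.card - 2 := by
          rw [hA', Finset.card_erase_of_mem hfa_mem, Finset.card_erase_of_mem haA]
          omega
        have hnotA' : a ∉ A' := by
          simp [hA', Finset.mem_erase]
        have hfanotA' : f a ∉ A' := by
          simp [hA', Finset.mem_erase]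
        have hcl' : ∀ b ∈ A', f b ∈ A' := by
          intro b hb
          have hbA : b ∈ A := Finset.mem_of_mem_erase (Finset.mem_of_mem_erase hb)
          have hba : b ≠ a := by
            intro h; subst h; exact hnotA' hb
          have hbfa : b ≠ f a := by
            intro h; subst h; exact hfanotA' hb
          refine Finset.mem_erase.mpr ⟨?_, Finset.mem_erase.mpr ⟨?_, hcl b hbA⟩⟩
          · intro h; apply hba; have := congrArg f h; rwa [hf, hf] at this
          · intro h; apply hbfa; rw [← h, hf]
        have hs2 : 2 ≤ s := by
          rcases hev with ⟨t, ht⟩; omega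
        have hle2 : A.card ≥ 2 := by
          have : ({a, f a} : Finset α).card = 2 := by
            rw [Finset.card_pair (Ne.symm hane)]
          calc 2 = ({a, f a} : Finset α).card := this.symm
            _ ≤ A.card := Finset.card_le_card (by
              intro z hz
              rcases Finset.mem_insert.mp hz with rfl | hz
              · exact haA
              · rw [Finset.mem_singleton.mp hz]; exact hfaA)
        obtain ⟨S', hS'A, hS'card, hS'cl⟩ := ih (s - 2) (by omega) A' hcl'
          (by omega) (Or.inl (by rcases hev with ⟨t, ht⟩; exact ⟨t - 1, by omega⟩))
        refine ⟨insert a (insert (f a) S'), ?_, ?_, ?_⟩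
        · intro z hz
          rcases Finset.mem_insert.mp hz with rfl | hz
          · exact haA
          rcases Finset.mem_insert.mp hz with rfl | hz
          · exact hfaA
          · exact Finset.mem_of_mem_erase (Finset.mem_of_mem_erase (hS'A hz))
        · have h1 : a ∉ insert (f a) S' := by
            intro h
            rcases Finset.mem_insert.mp h with h | h
            · exact hane h.symm
            · exact hnotA' (hS'A h)
          have h2 : f a ∉ S' := fun h => hfanotA' (hS'A h)
          rw [Finset.card_insert_of_notMem h1, Finset.card_insert_of_notMem h2, hS'card]
          omega
        · intro z hz
          rcases Finset.mem_insert.mp hz with rfl | hz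
          · exact Finset.mem_insert_of_mem (Finset.mem_insert_self _ _)
          rcases Finset.mem_insert.mp hz with rfl | hz
          · rw [hf]; exact Finset.mem_insert_self _ _
          · exact Finset.mem_insert_of_mem (Finset.mem_insert_of_mem (hS'cl z hz))
      · push_neg at hmov
        obtain ⟨S, hSA, hcard⟩ := Finset.exists_subset_card_eq hle
        exact ⟨S, hSA, hcard, fun a ha => by rw [hmov a (hSA ha)]; exact ha⟩
    · have hfix : ∃ a ∈ A, f a = a := hpar.resolve_left hev
      obtain ⟨a, haA, hfa⟩ := hfix
      have hcl' : ∀ b ∈ A.erase a, f b ∈ A.erase a := by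
        intro b hb
        obtain ⟨hba, hbA⟩ := Finset.mem_erase.mp hb
        refine Finset.mem_erase.mpr ⟨?_, hcl b hbA⟩
        intro h; apply hba; rw [← hf b, h, hfa]
      obtain ⟨S', hS'A, hS'card, hS'cl⟩ := ih (s - 1) (by omega) (A.erase a) hcl'
        (by rw [Finset.card_erase_of_mem haA]; omega)
        (Or.inl (by rw [Nat.even_sub hs0]; simpa using hev))
      have hanot : a ∉ S' := fun h => (Finset.mem_erase.mp (hS'A h)).1 rfl
      refine ⟨insert a S', ?_, ?_, ?_⟩
      · intro z hz
        rcases Finset.mem_insert.mp hz with rfl | hz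
        · exact haA
        · exact Finset.mem_of_mem_erase (hS'A hz)
      · rw [Finset.card_insert_of_notMem hanot, hS'card]; omega
      · intro z hz
        rcases Finset.mem_insert.mp hz with rfl | hz
        · rw [hfa]; exact Finset.mem_insert_self _ _
        · exact Finset.mem_insert_of_mem (hS'cl z hz)

lemma even_card_of_fpf {α : Type*} [DecidableEq α] (f : α → α)
    (hf : ∀ a, f (f a) = a) :
    ∀ (n : ℕ) (A : Finset α), A.card = n → (∀ a ∈ A, f a ∈ A) → (∀ a ∈ A, f a ≠ a) →
      Even A.card := by
  intro n
  induction n using Nat.strong_induction_on with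
  | _ n ih =>
    intro A hn hcl hfpf
    rcases A.eq_empty_or_nonempty with rfl | ⟨a, haA⟩
    · simp
    · have hfaA : f a ∈ A := hcl a haA
      have hane : f a ≠ a := hfpf a haA
      set A' := (A.erase a).erase (f a) with hA'
      have hfa_mem : f a ∈ A.erase a := Finset.mem_erase.mpr ⟨hane, hfaA⟩
      have hcard' : A'.card = A.card - 2 := by
        rw [hA', Finset.card_erase_of_mem hfa_mem, Finset.card_erase_of_mem haA]
        omega
      have hnotA' : a ∉ A' := by simp [hA', Finset.mem_erase]
      have hfanotA' : f a ∉ A' := by simp [hA', Finset.mem_erase]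
      have hcl' : ∀ b ∈ A', f b ∈ A' := by
        intro b hb
        have hbA : b ∈ A := Finset.mem_of_mem_erase (Finset.mem_of_mem_erase hb)
        have hba : b ≠ a := fun h => hnotA' (h ▸ hb)
        have hbfa : b ≠ f a := fun h => hfanotA' (h ▸ hb)
        refine Finset.mem_erase.mpr ⟨?_, Finset.mem_erase.mpr ⟨?_, hcl b hbA⟩⟩
        · intro h; apply hba; have := congrArg f h; rwa [hf, hf] at this
        · intro h; apply hbfa; rw [← h, hf]
      have hfpf' : ∀ b ∈ A', f b ≠ b := fun b hb =>
        hfpf b (Finset.mem_of_mem_erase (Finset.mem_of_mem_erase hb))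
      have hge2 : 2 ≤ A.card := by
        have : ({f a, a} : Finset α).card = 2 := Finset.card_pair hane
        calc 2 = ({f a, a} : Finset α).card := this.symm
          _ ≤ A.card := Finset.card_le_card (by
            intro z hz
            rcases Finset.mem_insert.mp hz with rfl | hz
            · exact hfaA
            · rw [Finset.mem_singleton.mp hz]; exact haA)
      have := ih (n - 2) (by omega) A' (by omega) hcl' hfpf'
      rw [hcard'] at this
      rcases this with ⟨t, ht⟩
      exact ⟨t + 1, by omega⟩

lemma zmod_self_inv {k : ℕ} [NeZero k] {d : ZMod k} (h : -d = d) :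
    d = 0 ∨ (k % 2 = 0 ∧ d = ((k / 2 : ℕ) : ZMod k)) := by
  have h2 : d + d = 0 := by nth_rewrite 1 [← h]; exact neg_add_cancel d
  have hv := congrArg ZMod.val h2
  rw [ZMod.val_add, ZMod.val_zero] at hv
  have hdvd : k ∣ d.val + d.val := Nat.dvd_of_mod_eq_zero hv
  have hlt : d.val < k := ZMod.val_lt d
  obtain ⟨c, hc⟩ := hdvd
  have hk0 : 0 < k := Nat.pos_of_ne_zero (NeZero.ne k)
  have hc2 : c = 0 ∨ c = 1 := by
    rcases Nat.lt_or_ge c 2 with h' | h'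
    · omega
    · exfalso
      have : k * 2 ≤ k * c := Nat.mul_le_mul_left k h'
      omega
  rcases hc2 with rfl | rfl
  · left
    have : d.val = 0 := by omega
    exact (ZMod.val_eq_zero d).mp this
  · right
    have hk2 : k % 2 = 0 := by omega
    have hval : d.val = k / 2 := by omega
    refine ⟨hk2, ?_⟩
    have := ZMod.natCast_rightInverse (n := k) d
    rw [← this, hval]

lemma zmod_half_neg {k : ℕ} [NeZero k] (hk : k % 2 = 0) :
    -(((k / 2 : ℕ) : ZMod k)) = ((k / 2 : ℕ) : ZMod k) := by
  have hk0 : 0 < k := Nat.pos_of_ne_zero (NeZero.ne k)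
  rw [neg_eq_iff_add_eq_zero, ← Nat.cast_add]
  have : k / 2 + k / 2 = k := by omega
  rw [this, ZMod.natCast_self]

lemma zmod_half_ne_zero {k : ℕ} [NeZero k] (hk : k % 2 = 0) :
    ((k / 2 : ℕ) : ZMod k) ≠ 0 := by
  have hk0 : 0 < k := Nat.pos_of_ne_zero (NeZero.ne k)
  intro h0
  rw [ZMod.natCast_eq_zero_iff] at h0
  obtain ⟨c, hc⟩ := h0
  rcases Nat.lt_or_ge c 1 with h' | h'
  · have hc0' : c = 0 := by omega
    rw [hc0', Nat.mul_zero] at hc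
    omega
  · have : k * 1 ≤ k * c := Nat.mul_le_mul_left k h'
    omega

lemma exists_good_c (E : Prop) (k m : ℕ) [NeZero k] (hm : 0 < m)
    (hE : ¬E → Even m ∧ Even k) :
    ∀ b, b ≤ k * m →
      ∃ c : ZMod k → ℕ, (∀ d, c (-d) = c d) ∧ (∀ d, c d ≤ m) ∧
        (∑ d : ZMod k, c d = b) ∧ (Odd (c 0) → E) := by
  have hk0 : 0 < k := Nat.pos_of_ne_zero (NeZero.ne k)
  intro b
  induction b using Nat.strong_induction_on with
  | _ b ih =>
    intro hb
    match b, ih with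
    | 0, _ =>
      exact ⟨fun _ => 0, fun d => rfl, fun d => Nat.zero_le m, by simp, by simp [Nat.odd_iff]⟩
    | 1, _ =>
      by_cases hk2 : k % 2 = 0
      · have hneg := zmod_half_neg (k := k) hk2
        have hne0 := zmod_half_ne_zero (k := k) hk2
        set d0 : ZMod k := ((k / 2 : ℕ) : ZMod k) with hd0
        have hiff : ∀ d : ZMod k, (-d = d0) = (d = d0) := by
          intro d
          refine propext ⟨fun h => ?_, fun h => ?_⟩
          · rw [← hneg] at h; exact neg_injective h
          · rw [h, hneg]
        have h0d : (0 : ZMod k) ≠ d0 := Ne.symm hne0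
        refine ⟨fun d => if d = d0 then 1 else 0, ?_, ?_, ?_, ?_⟩
        · intro d; simp only [hiff]
        · intro d; dsimp only; split <;> omega
        · simp [Finset.sum_ite_eq']
        · intro hodd; exfalso; simp [h0d, Nat.odd_iff] at hodd
      · have hEE : E := by
          by_contra hEE
          have := (hE hEE).2
          rw [Nat.even_iff] at this
          omega
        refine ⟨fun d => if d = 0 then 1 else 0, ?_, ?_, ?_, fun _ => hEE⟩
        · intro d; simp only [neg_eq_zero]
        · intro d; dsimp only; split <;> omega
        · simp [Finset.sum_ite_eq']
    | (n+2), ih =>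
      obtain ⟨c, hcneg, hcm, hcsum, hc0⟩ := ih n (by omega) (by omega)
      have finish : ∀ δ : ZMod k → ℕ, (∀ d, δ (-d) = δ d) → (∀ d, c d + δ d ≤ m) →
          ((∑ d : ZMod k, δ d) = 2) → ((Odd (c 0 + δ 0)) → E) →
          ∃ c' : ZMod k → ℕ, (∀ d, c' (-d) = c' d) ∧ (∀ d, c' d ≤ m) ∧
            (∑ d : ZMod k, c' d = n + 2) ∧ (Odd (c' 0) → E) := by
        intro δ h1 h2 h3 h4
        refine ⟨fun d => c d + δ d, ?_, h2, ?_, h4⟩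
        · intro d; dsimp only; rw [hcneg, h1]
        · dsimp only; rw [Finset.sum_add_distrib, hcsum, h3]
      by_cases h1 : c 0 + 2 ≤ m
      · apply finish (fun d => if d = 0 then 2 else 0)
        · intro d; simp only [neg_eq_zero]
        · intro d; by_cases hd : d = 0
          · subst hd; simpa using h1
          · simpa [hd] using hcm d
        · simp [Finset.sum_ite_eq']
        · intro h; apply hc0
          simp at h
          rw [Nat.odd_iff] at h ⊢; omega
      · by_cases h2 : ∃ d : ZMod k, d ≠ 0 ∧ -d ≠ d ∧ c d + 1 ≤ m
        · obtain ⟨d, hd0, hdneg, hdm⟩ := h2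
          have e1 : ∀ e : ZMod k, (-e = d) = (e = -d) := by
            intro e; exact propext ⟨fun h => by rw [← h, neg_neg], fun h => by rw [h, neg_neg]⟩
          have e2 : ∀ e : ZMod k, (-e = -d) = (e = d) := fun e => propext neg_inj
          have h0d : (0 : ZMod k) ≠ d := Ne.symm hd0
          have h0nd : (0 : ZMod k) ≠ -d := fun h => hd0 (by rw [← neg_eq_zero, ← h])
          apply finish (fun e => (if e = d then 1 else 0) + (if e = -d then 1 else 0))
          · intro e; simp only [e1, e2]; exact add_comm _ _
          · intro e
            by_cases hed : e = d
            · subst hed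
              have hne : e ≠ -e := fun h => hdneg (by rw [← h])
              simp only [if_pos rfl, if_neg hne, if_true]
              simp
              omega
            · by_cases hed' : e = -d
              · subst hed'
                have hne : -d ≠ d := fun h => hdneg (by rw [h])
                simp [hne, hcneg]
                omega
              · simpa [hed, hed'] using hcm e
          · simp [Finset.sum_add_distrib, Finset.sum_ite_eq']
          · intro h
            simp only [if_neg h0d, if_neg h0nd, add_zero] at h
            exact hc0 h
        · push_neg at h2
          have hfull : ∀ d : ZMod k, d ≠ 0 → -d ≠ d → c d = m := by
            intro d hd hdn
            have := h2 d hd hdn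
            have := hcm d
            omega
          by_cases hk2 : k % 2 = 0
          · have hneg0 := zmod_half_neg (k := k) hk2
            have hne0 := zmod_half_ne_zero (k := k) hk2
            set d0 : ZMod k := ((k / 2 : ℕ) : ZMod k) with hd0def
            have hiff : ∀ e : ZMod k, (-e = d0) = (e = d0) := by
              intro e
              refine propext ⟨fun h => ?_, fun h => ?_⟩
              · rw [← hneg0] at h; exact neg_injective h
              · rw [h, hneg0]
            have h0d0 : (0 : ZMod k) ≠ d0 := Ne.symm hne0
            by_cases h3 : c d0 + 2 ≤ m
            · apply finish (fun e => if e = d0 then 2 else 0)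
              · intro e; simp only [hiff]
              · intro e; by_cases he : e = d0
                · subst he; simpa using h3
                · simpa [he] using hcm e
              · simp [Finset.sum_ite_eq']
              · intro h
                simp only [if_neg h0d0, add_zero] at h
                exact hc0 h
            · -- fully loaded case
              have hsub : ({0, d0} : Finset (ZMod k)) ⊆ Finset.univ := fun z _ => Finset.mem_univ z
              have hsplit := Finset.sum_sdiff (f := c) hsub
              have hpair : ∑ z ∈ ({0, d0} : Finset (ZMod k)), c z = c 0 + c d0 :=
                Finset.sum_pair h0d0
              have hrest : ∑ z ∈ (Finset.univ \ ({0, d0} : Finset (ZMod k))), c z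
                  = (k - 2) * m := by
                rw [Finset.sum_congr rfl (fun z hz => ?_), Finset.sum_const, smul_eq_mul]
                · congr 1
                  rw [Finset.card_sdiff_of_subset hsub, Finset.card_univ, ZMod.card,
                    Finset.card_pair h0d0]
                · obtain ⟨_, hz2⟩ := Finset.mem_sdiff.mp hz
                  simp only [Finset.mem_insert, Finset.mem_singleton] at hz2
                  push_neg at hz2
                  refine hfull z hz2.1 (fun hneg => ?_)
                  rcases zmod_self_inv hneg with h' | ⟨_, h'⟩
                  · exact hz2.1 h'
                  · exact hz2.2 h'
              have hk2' : 2 ≤ k := by omega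
              have e0 : c 0 + c d0 + (k - 2) * m = n := by
                rw [← hcsum, ← hsplit, hpair]; omega
              have e3 : k * m = (k - 2) * m + 2 * m := by
                have h22 : k - 2 + 2 = k := by omega
                calc k * m = (k - 2 + 2) * m := by rw [h22]
                  _ = (k - 2) * m + 2 * m := by ring
              have hineq : c 0 + c d0 + 2 ≤ 2 * m := by
                have := hb
                rw [e3] at this
                omega
              have hc0v : c 0 = m - 1 := by omega
              have hcd0v : c d0 = m - 1 := by omega
              have hEE : E := by
                by_cases hEE : E
                · exact hEE
                · exfalso
                  obtain ⟨hmeven, _⟩ := hE hEE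
                  apply hEE
                  apply hc0
                  rw [hc0v, Nat.odd_iff]
                  rw [Nat.even_iff] at hmeven
                  omega
              apply finish (fun e => (if e = 0 then 1 else 0) + (if e = d0 then 1 else 0))
              · intro e; simp only [neg_eq_zero, hiff]
              · intro e
                by_cases he : e = 0
                · subst he
                  simp [h0d0]
                  omega
                · by_cases he' : e = d0
                  · subst he'
                    simp [hne0]
                    omega
                  · simpa [he, he'] using hcm e
              · simp [Finset.sum_add_distrib, Finset.sum_ite_eq']
              · exact fun _ => hEE
          · exfalso
            have hall : ∀ d : ZMod k, d ≠ 0 → c d = m := by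
              intro d hd
              refine hfull d hd (fun hneg => ?_)
              rcases zmod_self_inv hneg with h' | ⟨h', _⟩
              · exact hd h'
              · omega
            have hsub : ({0} : Finset (ZMod k)) ⊆ Finset.univ := fun z _ => Finset.mem_univ z
            have hsplit := Finset.sum_sdiff (f := c) hsub
            have hrest : ∑ z ∈ (Finset.univ \ ({0} : Finset (ZMod k))), c z = (k - 1) * m := by
              rw [Finset.sum_congr rfl (fun z hz => ?_), Finset.sum_const, smul_eq_mul]
              · congr 1
                rw [Finset.card_sdiff_of_subset hsub, Finset.card_univ, ZMod.card, Finset.card_singleton]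
              · obtain ⟨_, hz2⟩ := Finset.mem_sdiff.mp hz
                rw [Finset.mem_singleton] at hz2
                exact hall z hz2
            rw [hrest, Finset.sum_singleton, hcsum] at hsplit
            have hcle := hcm 0
            have e3 : k * m = (k - 1) * m + m := by
              have h11 : k - 1 + 1 = k := by omega
              calc k * m = (k - 1 + 1) * m := by rw [h11]
                _ = (k - 1) * m + m := by ring
            rw [e3] at hb
            omega

lemma decompose_transversals {G : Type*} [Group G] [Fintype G] [DecidableEq G]
    (H : Subgroup G) [DecidablePred (· ∈ H)] (K S : Finset G) (b : ℕ) (hSK : S ⊆ K)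
    (hrow : ∀ g ∈ K, (S.filter (fun y => y * g⁻¹ ∈ H)).card = b) :
    ∃ R : Fin b → Finset G,
      (∀ i, R i ⊆ S) ∧
      (∀ i, ∀ g ∈ K, ∃! t, t ∈ R i ∧ t * g⁻¹ ∈ H) ∧
      (∀ i j, i ≠ j → Disjoint (R i) (R j)) ∧
      (∀ s ∈ S, ∃ i, s ∈ R i) := by
  letI : LinearOrder G :=
    LinearOrder.lift' (fun g => Fintype.equivFin G g) (Fintype.equivFin G).injective
  set F : G → Finset G := fun g => S.filter (fun y => y * g⁻¹ ∈ H) with hFdef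
  have F_congr : ∀ g y : G, y * g⁻¹ ∈ H → F y = F g := by
    intro g y hyg
    rw [hFdef]
    dsimp only
    apply Finset.filter_congr
    intro z _
    constructor
    · intro hz
      have h3 : z * g⁻¹ = (z * y⁻¹) * (y * g⁻¹) := by group
      rw [h3]; exact H.mul_mem hz hyg
    · intro hz
      have h3 : z * y⁻¹ = (z * g⁻¹) * (y * g⁻¹)⁻¹ := by group
      rw [h3]; exact H.mul_mem hz (H.inv_mem hyg)
  set elt : G → Fin b → G :=
    (fun g i => if h : (F g).card = b then ((F g).orderIsoOfFin h i : G) else 1) with helt_def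
  have helt : ∀ g ∈ K, ∀ i : Fin b, elt g i ∈ F g := by
    intro g hg i
    rw [helt_def]
    dsimp only
    rw [dif_pos (hrow g hg)]
    exact ((F g).orderIsoOfFin (hrow g hg) i).2
  have helt_inj : ∀ g ∈ K, ∀ i j : Fin b, elt g i = elt g j → i = j := by
    intro g hg i j hij
    rw [helt_def] at hij
    dsimp only at hij
    rw [dif_pos (hrow g hg), dif_pos (hrow g hg)] at hij
    exact ((F g).orderIsoOfFin (hrow g hg)).injective (Subtype.coe_injective hij)
  have helt_surj : ∀ g ∈ K, ∀ t ∈ F g, ∃ i : Fin b, elt g i = t := by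
    intro g hg t ht
    obtain ⟨i, hi⟩ := ((F g).orderIsoOfFin (hrow g hg)).surjective ⟨t, ht⟩
    refine ⟨i, ?_⟩
    rw [helt_def]
    dsimp only
    rw [dif_pos (hrow g hg), hi]
  have helt_congr : ∀ g g' : G, F g = F g' → ∀ i : Fin b, elt g i = elt g' i := by
    intro g g' h i
    rw [helt_def]
    dsimp only
    rw [h]
  refine ⟨fun i => K.image (fun g => elt g i), ?_, ?_, ?_, ?_⟩
  · intro i y hy
    obtain ⟨g, hg, rfl⟩ := Finset.mem_image.mp hy
    exact Finset.mem_filter.mp (helt g hg i) |>.1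
  · intro i g hg
    have hmem := helt g hg i
    have hmemf := Finset.mem_filter.mp hmem
    refine ⟨elt g i, ⟨Finset.mem_image.mpr ⟨g, hg, rfl⟩, hmemf.2⟩, ?_⟩
    rintro t' ⟨ht'R, ht'H⟩
    obtain ⟨g', hg', rfl⟩ := Finset.mem_image.mp ht'R
    have h1 : elt g' i * g'⁻¹ ∈ H := (Finset.mem_filter.mp (helt g' hg' i)).2
    have hFg' : F (elt g' i) = F g' := F_congr g' _ h1
    have hFg : F (elt g' i) = F g := F_congr g _ ht'H
    exact helt_congr g' g (hFg'.symm.trans hFg) i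
  · intro i j hij
    rw [Finset.disjoint_left]
    intro y hyi hyj
    obtain ⟨g, hg, hgy⟩ := Finset.mem_image.mp hyi
    obtain ⟨g', hg', hgy'⟩ := Finset.mem_image.mp hyj
    have h1 : elt g i * g⁻¹ ∈ H := (Finset.mem_filter.mp (helt g hg i)).2
    have h2 : elt g' j * g'⁻¹ ∈ H := (Finset.mem_filter.mp (helt g' hg' j)).2
    rw [hgy] at h1
    rw [hgy'] at h2
    have hFF : F g = F g' := (F_congr g y h1).symm.trans (F_congr g' y h2)
    have : elt g i = elt g j := by
      rw [hgy, ← hgy', helt_congr g' g hFF.symm j]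
    exact hij (helt_inj g hg i j this)
  · intro s hs
    have hsK : s ∈ K := hSK hs
    have hsF : s ∈ F s := by
      rw [hFdef]
      dsimp only
      refine Finset.mem_filter.mpr ⟨hs, ?_⟩
      simpa using H.one_mem
    obtain ⟨i, hi⟩ := helt_surj s hsK s hsF
    exact ⟨i, Finset.mem_image.mpr ⟨s, hsK, hi⟩⟩
lemma main_construction {G : Type*} [Group G] [Fintype G] [DecidableEq G]
    (H : Subgroup G) [DecidablePred (· ∈ H)] (K : Finset G)
    (hKne : K.Nonempty)
    (hKH : ∀ g ∈ K, ∀ h₁ ∈ H, ∀ h₂ ∈ H, h₁ * g * h₂ ∈ K)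
    (hdouble : ∀ g ∈ K, ∀ g' ∈ K, ∃ a ∈ H, ∃ c ∈ H, g' = a * g * c)
    (hKinv : ∀ g ∈ K, g⁻¹ ∈ K)
    (h1K : (1 : G) ∉ K)
    (hE2 : Odd (K.card / Nat.card H) → ∃ τ ∈ K, τ * τ = 1 ∧ τ ≠ 1)
    (b : ℕ) (hb : b ≤ Nat.card H) :
    ∃ S : Finset G, S ⊆ K ∧ (∀ g ∈ S, g⁻¹ ∈ S) ∧
      ∀ g ∈ K, (S.filter (fun y => y * g⁻¹ ∈ H)).card = b := by
  set n := Nat.card H with hn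
  haveI : Nonempty H := ⟨⟨1, H.one_mem⟩⟩
  have hn0 : 0 < n := Nat.card_pos
  set Row : G → Finset G := fun g => Finset.univ.filter (fun y => y * g⁻¹ ∈ H) with hRowdef
  have hRow_mem : ∀ g y : G, y ∈ Row g ↔ y * g⁻¹ ∈ H := by
    intro g y; rw [hRowdef]; simp
  have hRow_self : ∀ g : G, g ∈ Row g := by
    intro g; rw [hRow_mem]; simpa using H.one_mem
  have hRow_iff : ∀ g y : G, Row y = Row g ↔ y * g⁻¹ ∈ H := by
    intro g y
    constructor
    · intro h
      rw [← hRow_mem, ← h]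
      exact hRow_self y
    · intro h
      ext z
      rw [hRow_mem, hRow_mem]
      constructor
      · intro hz
        have h3 : z * g⁻¹ = (z * y⁻¹) * (y * g⁻¹) := by group
        rw [h3]; exact H.mul_mem hz h
      · intro hz
        have h3 : z * y⁻¹ = (z * g⁻¹) * (y * g⁻¹)⁻¹ := by group
        rw [h3]; exact H.mul_mem hz (H.inv_mem h)
  have hRow_card : ∀ g : G, (Row g).card = n := by
    intro g
    have himg : Row g = (H : Set G).toFinset.image (fun h => h * g) := by
      ext y
      rw [hRow_mem]
      simp only [Finset.mem_image, Set.mem_toFinset, SetLike.mem_coe]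
      constructor
      · intro hy
        exact ⟨y * g⁻¹, hy, by group⟩
      · rintro ⟨h, hh, rfl⟩
        simpa using hh
    rw [himg, Finset.card_image_of_injective _ (mul_left_injective g), Set.toFinset_card,
      hn, Nat.card_eq_fintype_card]
    exact Fintype.card_congr (Equiv.setCongr rfl)
  have hRow_sub : ∀ g ∈ K, Row g ⊆ K := by
    intro g hg y hy
    rw [hRow_mem] at hy
    have h0 := hKH g hg (y * g⁻¹) hy 1 H.one_mem
    have heq : y * g⁻¹ * g * 1 = y := by group
    rwa [heq] at h0
  set rows : Finset (Finset G) := K.image Row with hrowsdef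
  have hrows_mem : ∀ g ∈ K, Row g ∈ rows := by
    intro g hg; rw [hrowsdef]; exact Finset.mem_image_of_mem Row hg
  have hKcard : K.card = rows.card * n := by
    rw [Finset.card_eq_sum_card_fiberwise (f := Row) (t := rows) hrows_mem]
    rw [Finset.sum_congr rfl (fun t ht => ?_), Finset.sum_const, smul_eq_mul]
    obtain ⟨g₀, hg₀, rfl⟩ := Finset.mem_image.mp ht
    have hfib : K.filter (fun a => Row a = Row g₀) = Row g₀ := by
      ext y
      simp only [Finset.mem_filter]
      constructor
      · rintro ⟨_, h⟩
        rw [← h]; exact hRow_self y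
      · intro hy
        refine ⟨hRow_sub g₀ hg₀ hy, ?_⟩
        rw [hRow_iff, ← hRow_mem]
        exact hy
    rw [hfib, hRow_card]
  set k := rows.card with hkdef
  have hk0 : 0 < k := by
    rw [hkdef, hrowsdef]
    exact Finset.card_pos.mpr (hKne.image Row)
  haveI : NeZero k := ⟨hk0.ne'⟩
  have hkn : K.card / n = k := by
    rw [hKcard]
    exact Nat.mul_div_cancel _ hn0
  have ecard : Fintype.card { t // t ∈ rows } = Fintype.card (ZMod k) := by
    rw [Fintype.card_coe, ZMod.card]
  set e : { t // t ∈ rows } ≃ ZMod k := Fintype.equivOfCardEq ecard with hedef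
  set u : G → ZMod k := fun g => if h : Row g ∈ rows then e ⟨Row g, h⟩ else 0 with hudef
  have hu_eq : ∀ g ∈ K, ∀ y ∈ K, (u y = u g ↔ y * g⁻¹ ∈ H) := by
    intro g hg y hy
    rw [hudef]
    dsimp only
    rw [dif_pos (hrows_mem g hg), dif_pos (hrows_mem y hy)]
    rw [← hRow_iff g y]
    constructor
    · intro h
      have h2 := e.injective h
      exact congrArg Subtype.val h2
    · intro h
      congr 1
      exact Subtype.ext h
  have hu_surj : ∀ i : ZMod k, ∃ g ∈ K, u g = i := by
    intro i
    have ht := (e.symm i).2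
    obtain ⟨g₀, hg₀, hg₀t⟩ := Finset.mem_image.mp ht
    refine ⟨g₀, hg₀, ?_⟩
    rw [hudef]
    dsimp only
    rw [dif_pos (hrows_mem g₀ hg₀)]
    have h2 : (⟨Row g₀, hrows_mem g₀ hg₀⟩ : { t // t ∈ rows }) = e.symm i := Subtype.ext hg₀t
    rw [h2, e.apply_symm_apply]
  set Cell : ZMod k → ZMod k → Finset G :=
    fun i j => K.filter (fun g => u g = i ∧ u g⁻¹ = j) with hCelldef
  have hCell_mem : ∀ (i j : ZMod k) (g : G), g ∈ Cell i j ↔ g ∈ K ∧ u g = i ∧ u g⁻¹ = j := by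
    intro i j g; rw [hCelldef]; simp
  have hCell_inv : ∀ (i j : ZMod k) (g : G), g ∈ Cell i j → g⁻¹ ∈ Cell j i := by
    intro i j g hg
    rw [hCell_mem] at hg ⊢
    obtain ⟨h1, h2, h3⟩ := hg
    exact ⟨hKinv g h1, h3, by rw [inv_inv]; exact h2⟩
  have hCell_subK : ∀ i j : ZMod k, Cell i j ⊆ K := by
    intro i j g hg; exact ((hCell_mem i j g).mp hg).1
  have hstep1 : ∀ bb ∈ H, ∀ (i j : ZMod k) (z : G), z ∈ K → u z = j →
      (Cell i j).card = (Cell i (u (z * bb))).card := by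
    intro bb hbb i j z hz huz
    have hzbb : z * bb ∈ K := by
      have h0 := hKH z hz 1 H.one_mem bb hbb
      rwa [one_mul] at h0
    apply Finset.card_bij' (fun y _ => bb⁻¹ * y) (fun y _ => bb * y)
    · intro y hy
      rw [hCell_mem] at hy ⊢
      obtain ⟨hyK, hyu, hyinv⟩ := hy
      have hyinvK : y⁻¹ ∈ K := hKinv y hyK
      have mem1 : bb⁻¹ * y ∈ K := by
        have h0 := hKH y hyK bb⁻¹ (H.inv_mem hbb) 1 H.one_mem
        rwa [mul_one] at h0
      have mem2 : y⁻¹ * bb ∈ K := by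
        have h0 := hKH y⁻¹ hyinvK 1 H.one_mem bb hbb
        rwa [one_mul] at h0
      refine ⟨mem1, ?_, ?_⟩
      · rw [(hu_eq y hyK _ mem1).mpr, hyu]
        have h4 : (bb⁻¹ * y) * y⁻¹ = bb⁻¹ := by group
        rw [h4]; exact H.inv_mem hbb
      · have hrw : (bb⁻¹ * y)⁻¹ = y⁻¹ * bb := by group
        rw [hrw]
        have h5 : y⁻¹ * z⁻¹ ∈ H := (hu_eq z hz y⁻¹ hyinvK).mp (hyinv.trans huz.symm)
        rw [(hu_eq (z * bb) hzbb _ mem2).mpr]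
        have h6 : (y⁻¹ * bb) * (z * bb)⁻¹ = y⁻¹ * z⁻¹ := by group
        rw [h6]; exact h5
    · intro y hy
      rw [hCell_mem] at hy ⊢
      obtain ⟨hyK, hyu, hyinv⟩ := hy
      have hyinvK : y⁻¹ ∈ K := hKinv y hyK
      have mem1 : bb * y ∈ K := by
        have h0 := hKH y hyK bb hbb 1 H.one_mem
        rwa [mul_one] at h0
      have mem2 : y⁻¹ * bb⁻¹ ∈ K := by
        have h0 := hKH y⁻¹ hyinvK 1 H.one_mem bb⁻¹ (H.inv_mem hbb)
        rwa [one_mul] at h0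
      refine ⟨mem1, ?_, ?_⟩
      · rw [(hu_eq y hyK _ mem1).mpr, hyu]
        have h4 : (bb * y) * y⁻¹ = bb := by group
        rw [h4]; exact hbb
      · have hrw : (bb * y)⁻¹ = y⁻¹ * bb⁻¹ := by group
        rw [hrw]
        have h5 : y⁻¹ * (z * bb)⁻¹ ∈ H := (hu_eq (z * bb) hzbb y⁻¹ hyinvK).mp hyinv
        rw [(hu_eq z hz _ mem2).mpr, huz]
        have h6 : (y⁻¹ * bb⁻¹) * z⁻¹ = y⁻¹ * (z * bb)⁻¹ := by group
        rw [h6]; exact h5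
    · intro y _; group
    · intro y _; group
  have hstep2 : ∀ bb ∈ H, ∀ (i j : ZMod k) (z : G), z ∈ K → u z = i →
      (Cell i j).card = (Cell (u (z * bb)) j).card := by
    intro bb hbb i j z hz huz
    have hzbb : z * bb ∈ K := by
      have h0 := hKH z hz 1 H.one_mem bb hbb
      rwa [one_mul] at h0
    apply Finset.card_bij' (fun y _ => y * bb) (fun y _ => y * bb⁻¹)
    · intro y hy
      rw [hCell_mem] at hy ⊢
      obtain ⟨hyK, hyu, hyinv⟩ := hy
      have hyinvK : y⁻¹ ∈ K := hKinv y hyK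
      have mem1 : y * bb ∈ K := by
        have h0 := hKH y hyK 1 H.one_mem bb hbb
        rwa [one_mul] at h0
      have mem2 : bb⁻¹ * y⁻¹ ∈ K := by
        have h0 := hKH y⁻¹ hyinvK bb⁻¹ (H.inv_mem hbb) 1 H.one_mem
        rwa [mul_one] at h0
      refine ⟨mem1, ?_, ?_⟩
      · have h5 : y * z⁻¹ ∈ H := (hu_eq z hz y hyK).mp (hyu.trans huz.symm)
        rw [(hu_eq (z * bb) hzbb _ mem1).mpr]
        have h6 : (y * bb) * (z * bb)⁻¹ = y * z⁻¹ := by group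
        rw [h6]; exact h5
      · have hrw : (y * bb)⁻¹ = bb⁻¹ * y⁻¹ := by group
        rw [hrw]
        rw [(hu_eq y⁻¹ hyinvK _ mem2).mpr, hyinv]
        have h4 : (bb⁻¹ * y⁻¹) * (y⁻¹)⁻¹ = bb⁻¹ := by group
        rw [h4]; exact H.inv_mem hbb
    · intro y hy
      rw [hCell_mem] at hy ⊢
      obtain ⟨hyK, hyu, hyinv⟩ := hy
      have hyinvK : y⁻¹ ∈ K := hKinv y hyK
      have mem1 : y * bb⁻¹ ∈ K := by
        have h0 := hKH y hyK 1 H.one_mem bb⁻¹ (H.inv_mem hbb)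
        rwa [one_mul] at h0
      have mem2 : bb * y⁻¹ ∈ K := by
        have h0 := hKH y⁻¹ hyinvK bb hbb 1 H.one_mem
        rwa [mul_one] at h0
      refine ⟨mem1, ?_, ?_⟩
      · have h5 : y * (z * bb)⁻¹ ∈ H := (hu_eq (z * bb) hzbb y hyK).mp hyu
        rw [(hu_eq z hz _ mem1).mpr, huz]
        have h6 : (y * bb⁻¹) * z⁻¹ = y * (z * bb)⁻¹ := by group
        rw [h6]; exact h5
      · have hrw : (y * bb⁻¹)⁻¹ = bb * y⁻¹ := by group
        rw [hrw]
        rw [(hu_eq y⁻¹ hyinvK _ mem2).mpr, hyinv]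
        have h4 : (bb * y⁻¹) * (y⁻¹)⁻¹ = bb := by group
        rw [h4]; exact hbb
    · intro y _; group
    · intro y _; group
  have hsnd : ∀ (i j j' : ZMod k), (Cell i j).card = (Cell i j').card := by
    intro i j j'
    obtain ⟨z, hz, huz⟩ := hu_surj j
    obtain ⟨z', hz', huz'⟩ := hu_surj j'
    obtain ⟨a, ha, cc, hc, hzz'⟩ := hdouble z hz z' hz'
    have hzcc : z * cc ∈ K := by
      have h0 := hKH z hz 1 H.one_mem cc hc
      rwa [one_mul] at h0
    have hucc : u (z * cc) = j' := by
      have hrel : z' * (z * cc)⁻¹ ∈ H := by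
        have h7 : z' * (z * cc)⁻¹ = a := by rw [hzz']; group
        rw [h7]; exact ha
      have h8 := (hu_eq (z * cc) hzcc z' hz').mpr hrel
      rw [← h8, huz']
    calc (Cell i j).card = (Cell i (u (z * cc))).card := hstep1 cc hc i j z hz huz
      _ = (Cell i j').card := by rw [hucc]
  have hfst : ∀ (i i' j : ZMod k), (Cell i j).card = (Cell i' j).card := by
    intro i i' j
    obtain ⟨z, hz, huz⟩ := hu_surj i
    obtain ⟨z', hz', huz'⟩ := hu_surj i'
    obtain ⟨a, ha, cc, hc, hzz'⟩ := hdouble z hz z' hz'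
    have hzcc : z * cc ∈ K := by
      have h0 := hKH z hz 1 H.one_mem cc hc
      rwa [one_mul] at h0
    have hucc : u (z * cc) = i' := by
      have hrel : z' * (z * cc)⁻¹ ∈ H := by
        have h7 : z' * (z * cc)⁻¹ = a := by rw [hzz']; group
        rw [h7]; exact ha
      have h8 := (hu_eq (z * cc) hzcc z' hz').mpr hrel
      rw [← h8, huz']
    calc (Cell i j).card = (Cell (u (z * cc)) j).card := hstep2 cc hc i j z hz huz
      _ = (Cell i' j).card := by rw [hucc]
  have hcellm : ∀ i j : ZMod k, (Cell i j).card = (Cell 0 0).card := fun i j =>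
    (hfst i 0 j).trans (hsnd 0 j 0)
  set m := (Cell 0 0).card with hmdef
  have hnm : n = k * m := by
    obtain ⟨g₀, hg₀⟩ := hKne
    have h2 : (Row g₀).card = ∑ j : ZMod k, ((Row g₀).filter (fun y => u y⁻¹ = j)).card :=
      Finset.card_eq_sum_card_fiberwise (fun yy _ => Finset.mem_univ _)
    have h3 : ∀ j : ZMod k, (Row g₀).filter (fun y => u y⁻¹ = j) = Cell (u g₀) j := by
      intro j
      ext y
      rw [Finset.mem_filter, hRow_mem, hCell_mem]
      constructor
      · rintro ⟨hy1, hy2⟩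
        have hyK : y ∈ K := hRow_sub g₀ hg₀ (by rw [hRow_mem]; exact hy1)
        exact ⟨hyK, (hu_eq g₀ hg₀ y hyK).mpr hy1, hy2⟩
      · rintro ⟨hyK, hy2, hy3⟩
        exact ⟨(hu_eq g₀ hg₀ y hyK).mp hy2, hy3⟩
    calc n = (Row g₀).card := (hRow_card g₀).symm
      _ = ∑ j : ZMod k, ((Row g₀).filter (fun y => u y⁻¹ = j)).card := h2
      _ = ∑ _j : ZMod k, m := Finset.sum_congr rfl (fun j _ => by rw [h3 j, hcellm])
      _ = k * m := by rw [Finset.sum_const, smul_eq_mul, Finset.card_univ, ZMod.card]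
  have hm0 : 0 < m := by
    rcases Nat.eq_zero_or_pos m with h | h
    · rw [h, Nat.mul_zero] at hnm; omega
    · exact h
  have hEnec : ¬(∃ τ ∈ K, τ * τ = 1 ∧ τ ≠ 1) → Even m ∧ Even k := by
    intro hne
    constructor
    · apply even_card_of_fpf (fun g : G => g⁻¹) (fun g => inv_inv g) (Cell 0 0).card
        (Cell 0 0) rfl (fun a ha => hCell_inv 0 0 a ha)
      intro a ha hfix
      exfalso
      apply hne
      have haK : a ∈ K := hCell_subK 0 0 ha
      refine ⟨a, haK, ?_, ?_⟩
      · nth_rewrite 2 [← hfix]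
        exact mul_inv_cancel a
      · intro h1; rw [h1] at haK; exact h1K haK
    · rw [hkn] at hE2
      exact Nat.not_odd_iff_even.mp (fun hodd => hne (hE2 hodd))
  have hdiag_invol : (∃ τ ∈ K, τ * τ = 1 ∧ τ ≠ 1) → ∀ i : ZMod k,
      ∃ τ' ∈ Cell i i, τ'⁻¹ = τ' := by
    rintro ⟨τ, hτK, hττ, hτ1⟩ i
    obtain ⟨g, hgK, hgu⟩ := hu_surj i
    obtain ⟨a, ha, cc, hc, hgeq⟩ := hdouble τ hτK g hgK
    have hτ'K : cc⁻¹ * τ * cc ∈ K := hKH τ hτK cc⁻¹ (H.inv_mem hc) cc hc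
    have hτ'2 : (cc⁻¹ * τ * cc) * (cc⁻¹ * τ * cc) = 1 := by
      have h9 : (cc⁻¹ * τ * cc) * (cc⁻¹ * τ * cc) = cc⁻¹ * (τ * τ) * cc := by group
      rw [h9, hττ]; group
    have hτ'inv : (cc⁻¹ * τ * cc)⁻¹ = cc⁻¹ * τ * cc := inv_eq_of_mul_eq_one_right hτ'2
    have hτ'u : u (cc⁻¹ * τ * cc) = i := by
      have hrel : (cc⁻¹ * τ * cc) * g⁻¹ ∈ H := by
        have h7 : (cc⁻¹ * τ * cc) * g⁻¹ = cc⁻¹ * a⁻¹ := by rw [hgeq]; group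
        rw [h7]; exact H.mul_mem (H.inv_mem hc) (H.inv_mem ha)
      rw [(hu_eq g hgK _ hτ'K).mpr hrel, hgu]
    refine ⟨cc⁻¹ * τ * cc, ?_, hτ'inv⟩
    rw [hCell_mem]
    exact ⟨hτ'K, hτ'u, by rw [hτ'inv]; exact hτ'u⟩
  have hbkm : b ≤ k * m := by rw [← hnm]; exact hb
  obtain ⟨c, hcneg, hcm, hcsum, hc0E⟩ :=
    exists_good_c (∃ τ ∈ K, τ * τ = 1 ∧ τ ≠ 1) k m hm0 hEnec b hbkm
  have hdiagpiece : ∀ i : ZMod k, ∃ DD, DD ⊆ Cell i i ∧ DD.card = c 0 ∧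
      ∀ a ∈ DD, a⁻¹ ∈ DD := by
    intro i
    apply exists_inv_closed_subset (fun g : G => g⁻¹) (fun g => inv_inv g) (c 0) (Cell i i)
      (fun a ha => hCell_inv i i a ha)
      (by rw [hcellm i i]; exact hcm 0)
    by_cases hev : Even (c 0)
    · exact Or.inl hev
    · right
      obtain ⟨τ', hτ', hτ'inv⟩ := hdiag_invol (hc0E (Nat.not_even_iff_odd.mp hev)) i
      exact ⟨τ', hτ', hτ'inv⟩
  choose D hD1 hD2 hD3 using hdiagpiece
  have hoffpiece : ∀ i j : ZMod k, ∃ A, A ⊆ Cell i j ∧ A.card = c (i - j) := by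
    intro i j
    exact Finset.exists_subset_card_eq (by rw [hcellm i j]; exact hcm _)
  choose A hA1 hA2 using hoffpiece
  set Piece : ZMod k → ZMod k → Finset G := fun i j =>
    if i = j then D i else if i.val < j.val then A i j
    else (A j i).image (fun y => y⁻¹) with hPdef
  have hP_sub : ∀ i j : ZMod k, Piece i j ⊆ Cell i j := by
    intro i j
    rw [hPdef]
    dsimp only
    by_cases hij : i = j
    · subst hij; rw [if_pos rfl]; exact hD1 i
    · rw [if_neg hij]
      by_cases hlt : i.val < j.val
      · rw [if_pos hlt]; exact hA1 i j
      · rw [if_neg hlt]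
        intro y hy
        obtain ⟨z, hz, rfl⟩ := Finset.mem_image.mp hy
        exact hCell_inv j i z (hA1 j i hz)
  have hP_card : ∀ i j : ZMod k, (Piece i j).card = c (i - j) := by
    intro i j
    rw [hPdef]
    dsimp only
    by_cases hij : i = j
    · subst hij; rw [if_pos rfl, sub_self]; exact hD2 i
    · rw [if_neg hij]
      by_cases hlt : i.val < j.val
      · rw [if_pos hlt]; exact hA2 i j
      · rw [if_neg hlt, Finset.card_image_of_injective _ (fun a b h => by
          rwa [inv_inj] at h), hA2 j i]
        rw [show i - j = -(j - i) by ring, hcneg]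
  have hP_inv : ∀ (i j : ZMod k) (y : G), y ∈ Piece i j → y⁻¹ ∈ Piece j i := by
    intro i j y hy
    by_cases hij : i = j
    · subst hij
      rw [hPdef] at hy ⊢
      dsimp only at hy ⊢
      rw [if_pos rfl] at hy ⊢
      exact hD3 i y hy
    · have hvalne : i.val ≠ j.val := fun h => hij (ZMod.val_injective k h)
      rw [hPdef] at hy ⊢
      dsimp only at hy ⊢
      rw [if_neg hij] at hy
      rw [if_neg (Ne.symm hij)]
      by_cases hlt : i.val < j.val
      · rw [if_pos hlt] at hy
        rw [if_neg (by omega)]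
        exact Finset.mem_image_of_mem _ hy
      · rw [if_neg hlt] at hy
        rw [if_pos (by omega)]
        obtain ⟨z, hz, rfl⟩ := Finset.mem_image.mp hy
        rwa [inv_inv]
  set S : Finset G := Finset.univ.biUnion
    (fun p : ZMod k × ZMod k => Piece p.1 p.2) with hSdef
  have hS_mem : ∀ y : G, y ∈ S ↔ ∃ p : ZMod k × ZMod k, y ∈ Piece p.1 p.2 := by
    intro y; rw [hSdef]; simp
  have hS_sub : S ⊆ K := by
    intro y hy
    obtain ⟨p, hp⟩ := (hS_mem y).mp hy
    exact hCell_subK p.1 p.2 (hP_sub p.1 p.2 hp)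
  have hS_inv : ∀ g ∈ S, g⁻¹ ∈ S := by
    intro g hg
    obtain ⟨p, hp⟩ := (hS_mem g).mp hg
    exact (hS_mem g⁻¹).mpr ⟨(p.2, p.1), hP_inv p.1 p.2 g hp⟩
  have hS_cell : ∀ i j : ZMod k, S ∩ Cell i j = Piece i j := by
    intro i j
    apply Finset.Subset.antisymm
    · intro y hy
      obtain ⟨hyS, hyC⟩ := Finset.mem_inter.mp hy
      obtain ⟨p, hp⟩ := (hS_mem y).mp hyS
      have hyC' := hP_sub p.1 p.2 hp
      rw [hCell_mem] at hyC hyC'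
      have hp1 : p.1 = i := hyC'.2.1.symm.trans hyC.2.1
      have hp2 : p.2 = j := hyC'.2.2.symm.trans hyC.2.2
      rwa [hp1, hp2] at hp
    · intro y hy
      exact Finset.mem_inter.mpr ⟨(hS_mem y).mpr ⟨(i, j), hy⟩, hP_sub i j hy⟩
  refine ⟨S, hS_sub, hS_inv, ?_⟩
  intro g hg
  have hTcard : (S.filter (fun y => y * g⁻¹ ∈ H)).card
      = ∑ j : ZMod k, ((S.filter (fun y => y * g⁻¹ ∈ H)).filter
        (fun y => u y⁻¹ = j)).card :=
    Finset.card_eq_sum_card_fiberwise (fun yy _ => Finset.mem_univ _)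
  have hfib : ∀ j : ZMod k, (S.filter (fun y => y * g⁻¹ ∈ H)).filter
      (fun y => u y⁻¹ = j) = Piece (u g) j := by
    intro j
    rw [← hS_cell (u g) j]
    ext y
    rw [Finset.mem_filter, Finset.mem_filter, Finset.mem_inter, hCell_mem]
    constructor
    · rintro ⟨⟨hyS, hyH⟩, hyj⟩
      have hyK : y ∈ K := hS_sub hyS
      exact ⟨hyS, hyK, (hu_eq g hg y hyK).mpr hyH, hyj⟩
    · rintro ⟨hyS, hyK, hyu, hyj⟩
      exact ⟨⟨hyS, (hu_eq g hg y hyK).mp hyu⟩, hyj⟩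
  rw [hTcard, Finset.sum_congr rfl (fun j _ => by rw [hfib j, hP_card])]
  calc ∑ j : ZMod k, c (u g - j)
      = ∑ d : ZMod k, c d := by
        rw [← Equiv.sum_comp (Equiv.subLeft (u g)) c]
        rfl
    _ = b := hcsum

theorem statement_19 {G : Type*} [Group G] [Fintype G] (p : ℕ) (hp : p.Prime)
    (hG : Nat.card G = 4 * p) (H : Subgroup G) (hH : H ≠ ⊥) (x : G) (hx : x ∉ H)
    (h1 : doubleCoset H x = doubleCoset H x⁻¹)
    (h2 : Odd ((doubleCoset H x).ncard / Nat.card H) →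
      ∃ t ∈ doubleCoset H x, orderOf t = 2) :
    ∀ b : ℕ, b ≤ Nat.card H →
      ∃ R : Fin b → Set G,
        (∀ i, IsRightTransversalIn H (doubleCoset H x) (R i)) ∧
        (∀ i j, i ≠ j → Disjoint (R i) (R j)) ∧
        (⋃ i, R i) = (⋃ i, R i)⁻¹ := by

  intro b hb
  classical
  have hmem : ∀ z g : G, g ∈ doubleCoset H z ↔ ∃ a ∈ H, ∃ c ∈ H, g = a * z * c := by
    intro z g
    simp only [doubleCoset, Set.mem_mul, Set.mem_singleton_iff, SetLike.mem_coe]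
    constructor
    · rintro ⟨v, ⟨w, hw, t, rfl, rfl⟩, c, hc, rfl⟩
      exact ⟨w, hw, c, hc, rfl⟩
    · rintro ⟨a, ha, c, hc, rfl⟩
      exact ⟨a * z, ⟨a, ha, z, rfl, rfl⟩, c, hc, rfl⟩
  have hfin : (doubleCoset H x).Finite := Set.toFinite _
  set K : Finset G := hfin.toFinset with hKdef
  have hK_memF : ∀ g : G, g ∈ K ↔ g ∈ doubleCoset H x := fun g => hfin.mem_toFinset
  have hxK : x ∈ K := by
    rw [hK_memF, hmem]
    exact ⟨1, H.one_mem, 1, H.one_mem, by group⟩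
  have hKne : K.Nonempty := ⟨x, hxK⟩
  have hKH : ∀ g ∈ K, ∀ h₁ ∈ H, ∀ h₂ ∈ H, h₁ * g * h₂ ∈ K := by
    intro g hg h₁ hh₁ h₂ hh₂
    rw [hK_memF, hmem] at hg ⊢
    obtain ⟨a, ha, c, hc, rfl⟩ := hg
    exact ⟨h₁ * a, H.mul_mem hh₁ ha, c * h₂, H.mul_mem hc hh₂, by group⟩
  have hdouble : ∀ g ∈ K, ∀ g' ∈ K, ∃ a ∈ H, ∃ c ∈ H, g' = a * g * c := by
    intro g hg g' hg'
    rw [hK_memF, hmem] at hg hg'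
    obtain ⟨a, ha, c, hc, rfl⟩ := hg
    obtain ⟨a', ha', c', hc', rfl⟩ := hg'
    exact ⟨a' * a⁻¹, H.mul_mem ha' (H.inv_mem ha), c⁻¹ * c', H.mul_mem (H.inv_mem hc) hc',
      by group⟩
  have hKinv : ∀ g ∈ K, g⁻¹ ∈ K := by
    intro g hg
    rw [hK_memF, hmem] at hg
    obtain ⟨a, ha, c, hc, rfl⟩ := hg
    rw [hK_memF, h1, hmem]
    exact ⟨c⁻¹, H.inv_mem hc, a⁻¹, H.inv_mem ha, by group⟩
  have h1K : (1 : G) ∉ K := by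
    intro hcon
    rw [hK_memF, hmem] at hcon
    obtain ⟨a, ha, c, hc, hac⟩ := hcon
    apply hx
    have hxeq : x = a⁻¹ * c⁻¹ := by
      rw [eq_comm] at hac
      calc x = a⁻¹ * (a * x * c) * c⁻¹ := by group
        _ = a⁻¹ * 1 * c⁻¹ := by rw [hac]
        _ = a⁻¹ * c⁻¹ := by group
    rw [hxeq]
    exact H.mul_mem (H.inv_mem ha) (H.inv_mem hc)
  have hE2 : Odd (K.card / Nat.card H) → ∃ τ ∈ K, τ * τ = 1 ∧ τ ≠ 1 := by
    intro hodd
    have hnc : (doubleCoset H x).ncard = K.card := Set.ncard_eq_toFinset_card _ hfin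
    obtain ⟨t, ht, hord⟩ := h2 (by rwa [hnc])
    refine ⟨t, (hK_memF t).mpr ht, ?_, ?_⟩
    · have hpow := pow_orderOf_eq_one t
      rw [hord, pow_two] at hpow
      exact hpow
    · intro hteq
      rw [hteq, orderOf_one] at hord
      omega
  obtain ⟨S, hS1, hS2, hS3⟩ := main_construction H K hKne hKH hdouble hKinv h1K hE2 b hb
  obtain ⟨R, hR1, hR2, hR3, hR4⟩ := decompose_transversals H K S b hS1 hS3
  refine ⟨fun i => (R i : Set G), ?_, ?_, ?_⟩
  · intro i
    constructor
    · intro y hy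
      exact (hK_memF y).mp (hS1 (hR1 i hy))
    · intro z hz
      have hzK : z ∈ K := (hK_memF z).mpr hz
      obtain ⟨t, ⟨ht1, ht2⟩, hun⟩ := hR2 i z hzK
      refine ⟨t, ⟨Finset.mem_coe.mpr ht1, ht2⟩, ?_⟩
      rintro t' ⟨ht'1, ht'2⟩
      exact hun t' ⟨Finset.mem_coe.mp ht'1, ht'2⟩
  · intro i j hij
    exact Finset.disjoint_coe.mpr (hR3 i j hij)
  · have hU : (⋃ i, ((R i : Finset G) : Set G)) = (S : Set G) := by
      ext y
      simp only [Set.mem_iUnion, Finset.mem_coe]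
      constructor
      · rintro ⟨i, hi⟩; exact hR1 i hi
      · intro hy; exact hR4 y hy
    rw [hU]
    ext y
    simp only [Set.mem_inv, Finset.mem_coe]
    constructor
    · intro hy
      exact hS2 y hy
    · intro hy
      have := hS2 _ hy
      rwa [inv_inv] at this
end
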